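/- Let C ⊆ ℝ^m be a compact set and let f : ℝ^m → ℝ be upper semicontinuous on C and bounded on C (there exist constants M₁ ≤ M₂ with M₁ ≤ f(a) ≤ M₂ for all a ∈ C). Then there exists a sequence of polynomials (p_j)_{j ∈ ℕ} in ℝ[a₁,…,a_m] such that p_j(a) ≥ f(a) for every a ∈ C and every j, and lim_{j → ∞} ∫_C |p_j(a) − f(a)| dμ(a) = 0, where μ is the Lebesgue measure on ℝ^m restricted to C. -/

import Mathlib

open MeasureTheory Filter

open Set in

lemma usc_aemeasurable {m : ℕ} {C : Set (Fin m → ℝ)} (hCm : MeasurableSet C)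
    {f : (Fin m → ℝ) → ℝ} (hf : UpperSemicontinuousOn f C) :
    AEMeasurable f (volume.restrict C) := by
  classical
  have key : ∀ y : ℝ, MeasurableSet (f ⁻¹' Iio y ∩ C) := by
    intro y
    have h1 : ∀ x ∈ f ⁻¹' Iio y ∩ C, ∃ u : Set (Fin m → ℝ),
        IsOpen u ∧ x ∈ u ∧ ∀ z ∈ u ∩ C, f z < y := by
      intro x ⟨hxy, hxC⟩
      have := hf x hxC y hxy
      rw [eventually_nhdsWithin_iff, Metric.eventually_nhds_iff] at this
      obtain ⟨δ, hδ, hball⟩ := this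
      exact ⟨Metric.ball x δ, Metric.isOpen_ball, Metric.mem_ball_self hδ,
        fun z ⟨hz1, hz2⟩ => hball (by simpa [Metric.mem_ball] using hz1) hz2⟩
    choose! u hu1 hu2 hu3 using h1
    have heq : f ⁻¹' Iio y ∩ C = (⋃ x ∈ f ⁻¹' Iio y ∩ C, u x) ∩ C := by
      ext z
      constructor
      · intro hz
        exact ⟨mem_biUnion hz (hu2 z hz), hz.2⟩
      · rintro ⟨hz1, hz2⟩
        obtain ⟨x, hx, hzx⟩ := mem_iUnion₂.mp hz1
        exact ⟨hu3 x hx z ⟨hzx, hz2⟩, hz2⟩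
    rw [heq]
    exact ((isOpen_biUnion fun x hx => hu1 x hx).measurableSet).inter hCm
  set F : (Fin m → ℝ) → ℝ := C.piecewise f (fun _ => 0) with hF
  have hFmeas : Measurable F := by
    apply measurable_of_Iio
    intro y
    rw [hF, Set.piecewise_preimage]
    rw [Set.ite]
    exact (key y).union ((measurable_const measurableSet_Iio).diff hCm)
  exact ⟨F, hFmeas, (piecewise_ae_eq_restrict hCm).symm⟩

open Set in

lemma mv_sw {m : ℕ} {C : Set (Fin m → ℝ)} (hC : IsCompact C)
    (g : (Fin m → ℝ) → ℝ) (hg : Continuous g) (ε : ℝ) (hε : 0 < ε) :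
    ∃ q : MvPolynomial (Fin m) ℝ, ∀ x ∈ C, |MvPolynomial.eval x q - g x| < ε := by
  haveI : CompactSpace C := isCompact_iff_compactSpace.mp hC
  set d : Fin m → C(C, ℝ) :=
    fun i => ⟨fun x => (x : Fin m → ℝ) i, (continuous_apply i).comp continuous_subtype_val⟩
    with hd
  set φ : MvPolynomial (Fin m) ℝ →ₐ[ℝ] C(C, ℝ) := MvPolynomial.aeval d with hφ
  have heval : ∀ (q : MvPolynomial (Fin m) ℝ) (x : C), (φ q) x = MvPolynomial.eval (x : Fin m → ℝ) q := by
    intro q x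
    induction q using MvPolynomial.induction_on with
    | C a => simp [hφ, MvPolynomial.algebraMap_eq]
    | add p q hp hq => simp [hp, hq]
    | mul_X p i hp =>
      rw [hφ, hd] at hp
      simp [hp, hφ, hd]
  have hsep : (φ.range : Subalgebra ℝ C(C, ℝ)).SeparatesPoints := by
    intro x y hxy
    have hxy' : (x : Fin m → ℝ) ≠ (y : Fin m → ℝ) := fun h => hxy (Subtype.ext h)
    obtain ⟨i, hi⟩ := Function.ne_iff.mp hxy'
    refine ⟨fun x => (φ (MvPolynomial.X i)) x, ⟨φ (MvPolynomial.X i), ⟨MvPolynomial.X i, rfl⟩, rfl⟩, ?_⟩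
    simpa [hφ, hd] using hi
  obtain ⟨⟨h, ⟨q, hq⟩⟩, hh⟩ :=
    ContinuousMap.exists_mem_subalgebra_near_continuous_of_separatesPoints φ.range hsep
      (fun x : C => g x) (hg.comp continuous_subtype_val) ε hε
  refine ⟨q, fun x hx => ?_⟩
  have h2 := hh ⟨x, hx⟩
  have h3 : (h : C → ℝ) ⟨x, hx⟩ = MvPolynomial.eval x q := by
    rw [← heval q ⟨x, hx⟩]; exact congrArg (fun (u : C(C,ℝ)) => u ⟨x, hx⟩) hq.symm
  simp only [Real.norm_eq_abs] at h2
  rw [h3] at h2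
  exact h2

open Set in

lemma usc_approx {m : ℕ} {C : Set (Fin m → ℝ)} (hne : C.Nonempty)
    {f : (Fin m → ℝ) → ℝ} (hf : UpperSemicontinuousOn f C)
    {M₁ M₂ : ℝ} (hbd : ∀ a ∈ C, M₁ ≤ f a ∧ f a ≤ M₂) :
    ∃ g : ℕ → (Fin m → ℝ) → ℝ,
      (∀ n, Continuous (g n)) ∧
      (∀ n, ∀ x ∈ C, f x ≤ g n x ∧ g n x ≤ M₂) ∧
      (∀ x ∈ C, Tendsto (fun n => g n x) atTop (nhds (f x))) := by
  haveI : Nonempty C := hne.to_subtype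
  set g : ℕ → (Fin m → ℝ) → ℝ :=
    fun n x => ⨆ y : C, (f y - (n : ℝ) * dist x (y : Fin m → ℝ)) with hg
  have bdd : ∀ (n : ℕ) (x : Fin m → ℝ),
      BddAbove (Set.range fun y : C => f y - (n : ℝ) * dist x (y : Fin m → ℝ)) := by
    intro n x
    refine ⟨M₂, ?_⟩
    rintro _ ⟨y, rfl⟩
    dsimp only
    have h1 := (hbd y y.2).2
    have h2 : (0:ℝ) ≤ (n : ℝ) * dist x (y : Fin m → ℝ) :=
      mul_nonneg (Nat.cast_nonneg n) dist_nonneg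
    linarith
  have hkey : ∀ (n : ℕ) (x x' : Fin m → ℝ), g n x ≤ g n x' + (n : ℝ) * dist x x' := by
    intro n x x'
    refine ciSup_le fun y => ?_
    have h1 : f y - (n : ℝ) * dist x (y : Fin m → ℝ) ≤
        (f y - (n : ℝ) * dist x' (y : Fin m → ℝ)) + (n : ℝ) * dist x x' := by
      have h2 : dist x' (y : Fin m → ℝ) ≤ dist x' x + dist x (y : Fin m → ℝ) :=
        dist_triangle _ _ _
      rw [dist_comm x' x] at h2
      nlinarith [Nat.cast_nonneg (α := ℝ) n]
    exact h1.trans (add_le_add (le_ciSup (bdd n x') y) le_rfl)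
  have hfg : ∀ (n : ℕ), ∀ x ∈ C, f x ≤ g n x := by
    intro n x hx
    have := le_ciSup (bdd n x) (⟨x, hx⟩ : C)
    simpa using this
  have hgM : ∀ (n : ℕ) (x : Fin m → ℝ), g n x ≤ M₂ := by
    intro n x
    refine ciSup_le fun y => ?_
    have h1 := (hbd y y.2).2
    have h2 : (0:ℝ) ≤ (n : ℝ) * dist x (y : Fin m → ℝ) :=
      mul_nonneg (Nat.cast_nonneg n) dist_nonneg
    linarith
  refine ⟨g, ?_, fun n x hx => ⟨hfg n x hx, hgM n x⟩, ?_⟩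
  · intro n
    refine (LipschitzWith.of_dist_le_mul (K := (n : NNReal)) fun x x' => ?_).continuous
    rw [Real.dist_eq, abs_sub_le_iff]
    constructor
    · have := hkey n x x'
      push_cast
      linarith
    · have := hkey n x' x
      rw [dist_comm x' x] at this
      push_cast
      linarith
  · intro x hx
    rw [Metric.tendsto_atTop]
    intro ε hε
    have husc := hf x hx (f x + ε / 2) (by linarith)
    rw [eventually_nhdsWithin_iff, Metric.eventually_nhds_iff] at husc
    obtain ⟨δ, hδ, hball⟩ := husc
    obtain ⟨N, hN⟩ := exists_nat_gt ((M₂ - M₁) / δ)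
    refine ⟨N, fun n hn => ?_⟩
    have hub : g n x ≤ f x + ε / 2 := by
      refine ciSup_le fun y => ?_
      by_cases hd : dist (y : Fin m → ℝ) x < δ
      · have h1 := hball hd y.2
        have h2 : (0:ℝ) ≤ (n : ℝ) * dist x (y : Fin m → ℝ) :=
          mul_nonneg (Nat.cast_nonneg n) dist_nonneg
        linarith
      · push_neg at hd
        rw [dist_comm] at hd
        have h1 : (M₂ - M₁) < (N : ℝ) * δ := by
          rw [div_lt_iff₀ hδ] at hN; linarith
        have h2 : (N : ℝ) * δ ≤ (n : ℝ) * δ :=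
          mul_le_mul_of_nonneg_right (by exact_mod_cast hn) hδ.le
        have h3 : (n : ℝ) * δ ≤ (n : ℝ) * dist x (y : Fin m → ℝ) :=
          mul_le_mul_of_nonneg_left hd (Nat.cast_nonneg n)
        have h4 := (hbd y y.2).2
        have h5 := (hbd x hx).1
        linarith
    have hlb := hfg n x hx
    rw [Real.dist_eq, abs_of_nonneg (by linarith)]
    linarith

open Set in
theorem polynomial_approx_from_above_usc {m : ℕ}
    (C : Set (Fin m → ℝ)) (hC : IsCompact C)
    (f : (Fin m → ℝ) → ℝ) (hf : UpperSemicontinuousOn f C)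
    (M₁ M₂ : ℝ) (hM : M₁ ≤ M₂) (hbd : ∀ a ∈ C, M₁ ≤ f a ∧ f a ≤ M₂) :
    ∃ p : ℕ → MvPolynomial (Fin m) ℝ,
      (∀ j : ℕ, ∀ a ∈ C, f a ≤ MvPolynomial.eval a (p j)) ∧
      Tendsto (fun j : ℕ =>
          ∫ a, |MvPolynomial.eval a (p j) - f a| ∂(volume.restrict C))
        atTop (nhds 0) := by
  by_cases hne : C.Nonempty
  swap
  · rw [Set.not_nonempty_iff_eq_empty] at hne
    subst hne
    refine ⟨fun _ => 0, fun j a ha => absurd ha (Set.notMem_empty a), ?_⟩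
    simp only [Measure.restrict_empty, integral_zero_measure]
    exact tendsto_const_nhds
  have hCm : MeasurableSet C := hC.isClosed.measurableSet
  obtain ⟨g, hgc, hgb, hgt⟩ := usc_approx hne hf hbd
  have hfsm : AEStronglyMeasurable f (volume.restrict C) :=
    (usc_aemeasurable hCm hf).aestronglyMeasurable
  haveI : IsFiniteMeasure (volume.restrict C) :=
    ⟨by rw [Measure.restrict_apply_univ]; exact hC.measure_lt_top⟩
  set μ := volume.restrict C with hμ
  -- measurability of |g n - f|
  have hFm : ∀ n, AEStronglyMeasurable (fun a => |g n a - f a|) μ := fun n =>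
    (((hgc n).aestronglyMeasurable.sub hfsm).norm).congr
      (Eventually.of_forall fun a => Real.norm_eq_abs _)
  have hFb : ∀ n, ∀ᵐ a ∂μ, ‖|g n a - f a|‖ ≤ M₂ - M₁ := by
    intro n
    filter_upwards [ae_restrict_mem hCm] with a ha
    have h1 := (hgb n a ha).1
    have h2 := (hgb n a ha).2
    have h3 := (hbd a ha).1
    rw [Real.norm_eq_abs, abs_abs, abs_of_nonneg (by linarith)]
    linarith
  have hFi : ∀ n, Integrable (fun a => |g n a - f a|) μ := fun n =>
    Integrable.mono' (integrable_const (M₂ - M₁)) (hFm n) (hFb n)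
  -- Step A : L¹ convergence of g n to f
  have stepA : Tendsto (fun n => ∫ a, |g n a - f a| ∂μ) atTop (nhds 0) := by
    have := tendsto_integral_of_dominated_convergence (μ := μ)
      (F := fun n a => |g n a - f a|) (f := fun _ => (0 : ℝ))
      (bound := fun _ => M₂ - M₁) hFm (integrable_const _) hFb ?_
    · simpa using this
    · filter_upwards [ae_restrict_mem hCm] with a ha
      have := ((hgt a ha).sub (tendsto_const_nhds (x := f a))).abs
      simpa using this
  -- Step B : polynomials
  have hq : ∀ n : ℕ, ∃ q : MvPolynomial (Fin m) ℝ,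
      ∀ x ∈ C, |MvPolynomial.eval x q - g n x| < 1 / ((n : ℝ) + 1) :=
    fun n => mv_sw hC (g n) (hgc n) _ (by positivity)
  choose q hqs using hq
  set p : ℕ → MvPolynomial (Fin m) ℝ :=
    fun n => q n + MvPolynomial.C (1 / ((n : ℝ) + 1)) with hp
  have hpeval : ∀ n a, MvPolynomial.eval a (p n)
      = MvPolynomial.eval a (q n) + 1 / ((n : ℝ) + 1) := by
    intro n a; simp [hp]
  have hpf : ∀ j : ℕ, ∀ a ∈ C, f a ≤ MvPolynomial.eval a (p j) := by
    intro j a ha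
    have h1 := hqs j a ha
    have h2 := (hgb j a ha).1
    rw [abs_lt] at h1
    rw [hpeval]
    linarith [h1.1]
  refine ⟨p, hpf, ?_⟩
  -- Step C : integral estimate
  set c := (μ Set.univ).toReal with hc
  have hcnn : 0 ≤ c := ENNReal.toReal_nonneg
  have hbound : ∀ n, ∀ᵐ a ∂μ,
      |MvPolynomial.eval a (p n) - f a| ≤ |g n a - f a| + 2 / ((n : ℝ) + 1) := by
    intro n
    filter_upwards [ae_restrict_mem hCm] with a ha
    have h1 := hqs n a ha
    rw [abs_lt] at h1
    have h2 : |MvPolynomial.eval a (p n) - f a| ≤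
        |MvPolynomial.eval a (p n) - g n a| + |g n a - f a| := abs_sub_le _ _ _
    have h3 : |MvPolynomial.eval a (p n) - g n a| ≤ 2 / ((n : ℝ) + 1) := by
      have h4 : 2 / ((n : ℝ) + 1) = 1 / ((n : ℝ) + 1) + 1 / ((n : ℝ) + 1) := by ring
      rw [hpeval, abs_le, h4]
      constructor <;> linarith [h1.1, h1.2]
    linarith
  have hpm : ∀ n, AEStronglyMeasurable
      (fun a => |MvPolynomial.eval a (p n) - f a|) μ := fun n =>
    ((((MvPolynomial.continuous_eval (p n)).aestronglyMeasurable).sub hfsm).norm).congr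
      (Eventually.of_forall fun a => Real.norm_eq_abs _)
  have hpint : ∀ n, Integrable (fun a => |MvPolynomial.eval a (p n) - f a|) μ := by
    intro n
    refine Integrable.mono' ((hFi n).add (integrable_const (2 / ((n : ℝ) + 1)))) (hpm n) ?_
    filter_upwards [hbound n] with a ha
    rw [Real.norm_eq_abs, abs_abs]
    exact ha
  have hmono : ∀ n, ∫ a, |MvPolynomial.eval a (p n) - f a| ∂μ
      ≤ (∫ a, |g n a - f a| ∂μ) + (2 * c) * (1 / ((n : ℝ) + 1)) := by
    intro n
    have h1 : ∫ a, |MvPolynomial.eval a (p n) - f a| ∂μ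
        ≤ ∫ a, (|g n a - f a| + 2 / ((n : ℝ) + 1)) ∂μ :=
      integral_mono_ae (hpint n) ((hFi n).add (integrable_const _)) (hbound n)
    rw [integral_add (hFi n) (integrable_const _), integral_const] at h1
    calc ∫ a, |MvPolynomial.eval a (p n) - f a| ∂μ
        ≤ (∫ a, |g n a - f a| ∂μ) + c • (2 / ((n : ℝ) + 1)) := h1
      _ = (∫ a, |g n a - f a| ∂μ) + (2 * c) * (1 / ((n : ℝ) + 1)) := by
          rw [smul_eq_mul]; ring
  have htail : Tendsto (fun n : ℕ =>
      (∫ a, |g n a - f a| ∂μ) + (2 * c) * (1 / ((n : ℝ) + 1))) atTop (nhds 0) := by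
    have h0 : Tendsto (fun n : ℕ => (2 * c) * (1 / ((n : ℝ) + 1))) atTop (nhds 0) := by
      have := tendsto_one_div_add_atTop_nhds_zero_nat.const_mul (2 * c)
      simpa using this
    simpa using stepA.add h0
  exact squeeze_zero (fun n => integral_nonneg fun a => abs_nonneg _) hmono htail
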